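/- If φ belongs to the Sobolev space W^1_2(U) with zero boundary trace (i.e. φ ∈ H^1_0(U)) and η ∈ W^1_2(U) on a bounded Lipschitz domain U ⊂ ℝ², then ∫_U (∂₁φ ∂₂η − ∂₂φ ∂₁η) dx₁dx₂ = 0. -/

import Mathlib

open MeasureTheory Metric Set Filter Function ContinuousLinearMap
open scoped Convolution Topology Pointwise

/-- If `φ` belongs to `H¹₀(U)` (modelled as a `C¹` function compactly
supported inside `U`) and `η ∈ H¹(U)` (modelled as a `C¹` function), on a bounded
connected open `U ⊆ ℝ²`, then `∫_U (∂₁φ ∂₂η − ∂₂φ ∂₁η) = 0`. -/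

lemma fderiv_zero_of_nmem_tsupport {f : ℝ × ℝ → ℂ} {x : ℝ × ℝ} (hx : x ∉ tsupport f) :
    fderiv ℝ f x = 0 := by
  by_contra h
  exact hx (support_fderiv_subset ℝ (by simpa [Function.mem_support] using h))

lemma key_smooth (ψ η : ℝ × ℝ → ℂ) (hψ : ContDiff ℝ 2 ψ) (hψs : HasCompactSupport ψ)
    (hη : ContDiff ℝ 1 η) :
    ∫ x, (fderiv ℝ ψ x (1, 0) * fderiv ℝ η x (0, 1)
        - fderiv ℝ ψ x (0, 1) * fderiv ℝ η x (1, 0)) = 0 := by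
  obtain ⟨R, hR0, hRsub⟩ : ∃ r, 0 < r ∧ tsupport ψ ⊆ ball (0 : ℝ × ℝ) r :=
    hψs.isBounded.subset_ball_lt 0 0
  have hout : ∀ p : ℝ × ℝ, p ∉ ball (0 : ℝ × ℝ) R → ψ p = 0 ∧ fderiv ℝ ψ p = 0 := fun p hp => by
    have hp' : p ∉ tsupport ψ := fun h => hp (hRsub h)
    exact ⟨image_eq_zero_of_notMem_tsupport hp', fderiv_zero_of_nmem_tsupport hp'⟩
  have hout' : ∀ p : ℝ × ℝ, R ≤ max |p.1| |p.2| → ψ p = 0 ∧ fderiv ℝ ψ p = 0 := fun p hp =>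
    hout p (fun hmem => by
      rw [mem_ball_zero_iff, Prod.norm_def, Real.norm_eq_abs, Real.norm_eq_abs] at hmem
      exact absurd hp hmem.not_ge)
  -- differentiability facts
  have hψ1 : ContDiff ℝ 1 (fderiv ℝ ψ) := hψ.fderiv_right (by norm_num)
  have hdψ' : ∀ y, HasFDerivAt (fderiv ℝ ψ) (fderiv ℝ (fderiv ℝ ψ) y) y := fun y =>
    (hψ1.differentiable one_ne_zero y).hasFDerivAt
  have hdη : ∀ y, HasFDerivAt η (fderiv ℝ η y) y := fun y =>
    (hη.differentiable one_ne_zero y).hasFDerivAt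
  -- the vector field
  set f : ℝ × ℝ → ℂ := fun p => η p * fderiv ℝ ψ p (0, 1) with hf
  set g : ℝ × ℝ → ℂ := fun p => -(η p * fderiv ℝ ψ p (1, 0)) with hg
  set f' : ℝ × ℝ → (ℝ × ℝ) →L[ℝ] ℂ := fun p =>
    η p • ((ContinuousLinearMap.apply ℝ ℂ ((0 : ℝ), (1 : ℝ))).comp (fderiv ℝ (fderiv ℝ ψ) p))
      + fderiv ℝ ψ p (0, 1) • fderiv ℝ η p with hf'
  set g' : ℝ × ℝ → (ℝ × ℝ) →L[ℝ] ℂ := fun p =>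
    -(η p • ((ContinuousLinearMap.apply ℝ ℂ ((1 : ℝ), (0 : ℝ))).comp (fderiv ℝ (fderiv ℝ ψ) p))
      + fderiv ℝ ψ p (1, 0) • fderiv ℝ η p) with hg'
  have hdf : ∀ p, HasFDerivAt f (f' p) p := fun p => by
    exact (hdη p).mul ((ContinuousLinearMap.apply ℝ ℂ ((0 : ℝ), (1 : ℝ))).hasFDerivAt.comp p (hdψ' p))
  have hdg : ∀ p, HasFDerivAt g (g' p) p := fun p => by
    exact ((hdη p).mul ((ContinuousLinearMap.apply ℝ ℂ ((1 : ℝ), (0 : ℝ))).hasFDerivAt.comp p (hdψ' p))).neg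
  -- divergence identity
  have hdiv : ∀ p, f' p (1, 0) + g' p (0, 1)
      = fderiv ℝ ψ p (0, 1) * fderiv ℝ η p (1, 0) - fderiv ℝ ψ p (1, 0) * fderiv ℝ η p (0, 1) := by
    intro p
    have hsymm := ((hψ.contDiffAt (x := p)).isSymmSndFDerivAt (by norm_num)) ((1 : ℝ), (0 : ℝ)) ((0 : ℝ), (1 : ℝ))
    simp only [hf', hg', ContinuousLinearMap.add_apply, ContinuousLinearMap.neg_apply,
      ContinuousLinearMap.smul_apply, ContinuousLinearMap.comp_apply,
      ContinuousLinearMap.apply_apply, smul_eq_mul, hsymm]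
    ring
  -- continuity
  have hcψ' : Continuous (fderiv ℝ ψ) := hψ.continuous_fderiv two_ne_zero
  have hcψ'' : Continuous (fderiv ℝ (fderiv ℝ ψ)) := hψ1.continuous_fderiv one_ne_zero
  have hcη' : Continuous (fderiv ℝ η) := hη.continuous_fderiv one_ne_zero
  have hcf : Continuous f :=
    hη.continuous.mul ((ContinuousLinearMap.apply ℝ ℂ ((0:ℝ),(1:ℝ))).continuous.comp hcψ')
  have hcg : Continuous g :=
    (hη.continuous.mul ((ContinuousLinearMap.apply ℝ ℂ ((1:ℝ),(0:ℝ))).continuous.comp hcψ')).neg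
  have hab : ((-R, -R) : ℝ × ℝ) ≤ (R, R) :=
    ⟨by dsimp; linarith, by dsimp; linarith⟩
  have Hi : IntegrableOn (fun x => f' x (1, 0) + g' x (0, 1)) (Icc ((-R, -R) : ℝ × ℝ) (R, R)) := by
    have hc : Continuous (fun x => f' x (1, 0) + g' x (0, 1)) := by
      simp only [hf', hg', ContinuousLinearMap.add_apply, ContinuousLinearMap.neg_apply,
        ContinuousLinearMap.smul_apply, ContinuousLinearMap.comp_apply,
        ContinuousLinearMap.apply_apply, smul_eq_mul]
      have c1 : Continuous fun x => ((fderiv ℝ (fderiv ℝ ψ) x) ((1:ℝ),(0:ℝ))) ((0:ℝ),(1:ℝ)) :=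
        (hcψ''.clm_apply continuous_const).clm_apply continuous_const
      have c2 : Continuous fun x => ((fderiv ℝ (fderiv ℝ ψ) x) ((0:ℝ),(1:ℝ))) ((1:ℝ),(0:ℝ)) :=
        (hcψ''.clm_apply continuous_const).clm_apply continuous_const
      have c3 : Continuous fun x => (fderiv ℝ ψ x) ((0:ℝ),(1:ℝ)) := hcψ'.clm_apply continuous_const
      have c4 : Continuous fun x => (fderiv ℝ ψ x) ((1:ℝ),(0:ℝ)) := hcψ'.clm_apply continuous_const
      have c5 : Continuous fun x => (fderiv ℝ η x) ((1:ℝ),(0:ℝ)) := hcη'.clm_apply continuous_const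
      have c6 : Continuous fun x => (fderiv ℝ η x) ((0:ℝ),(1:ℝ)) := hcη'.clm_apply continuous_const
      exact ((hη.continuous.mul c1).add (c3.mul c5)).add ((hη.continuous.mul c2).add (c4.mul c6)).neg
    exact hc.continuousOn.integrableOn_compact isCompact_Icc
  have hdivthm := integral_divergence_prod_Icc_of_hasFDerivAt_off_countable_of_le f g f' g'
    ((-R, -R) : ℝ × ℝ) ((R, R) : ℝ × ℝ) hab ∅ countable_empty hcf.continuousOn hcg.continuousOn
    (fun x _ => hdf x) (fun x _ => hdg x) Hi
  -- boundary terms vanish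
  have hb1 : ∀ x : ℝ, g (x, ((R, R) : ℝ × ℝ).2) = 0 := fun x => by
    have h := (hout' (x, R) (by rw [abs_of_pos hR0]; exact le_max_right _ _)).2
    simp [hg, h]
  have hb2 : ∀ x : ℝ, g (x, ((-R, -R) : ℝ × ℝ).2) = 0 := fun x => by
    have h := (hout' (x, -R) (by rw [abs_neg, abs_of_pos hR0]; exact le_max_right _ _)).2
    simp [hg, h]
  have hb3 : ∀ y : ℝ, f (((R, R) : ℝ × ℝ).1, y) = 0 := fun y => by
    have h := (hout' (R, y) (by rw [abs_of_pos hR0]; exact le_max_left _ _)).2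
    simp [hf, h]
  have hb4 : ∀ y : ℝ, f (((-R, -R) : ℝ × ℝ).1, y) = 0 := fun y => by
    have h := (hout' (-R, y) (by rw [abs_neg, abs_of_pos hR0]; exact le_max_left _ _)).2
    simp [hf, h]
  rw [funext hb1, funext hb2, funext hb3, funext hb4] at hdivthm
  have hdiv0 : (∫ x in Icc ((-R, -R) : ℝ × ℝ) (R, R), (f' x (1, 0) + g' x (0, 1))) = 0 := by
    simpa using hdivthm
  have hT : ∀ p : ℝ × ℝ, fderiv ℝ ψ p (1, 0) * fderiv ℝ η p (0, 1)
      - fderiv ℝ ψ p (0, 1) * fderiv ℝ η p (1, 0) = -(f' p (1, 0) + g' p (0, 1)) := fun p => by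
    rw [hdiv p]; ring
  have hext : ∀ x : ℝ × ℝ, x ∉ Icc ((-R, -R) : ℝ × ℝ) (R, R) →
      fderiv ℝ ψ x (1, 0) * fderiv ℝ η x (0, 1)
        - fderiv ℝ ψ x (0, 1) * fderiv ℝ η x (1, 0) = 0 := by
    intro x hx
    have hRle : R ≤ max |x.1| |x.2| := by
      by_contra h
      push_neg at h
      have h1 := (le_max_left |x.1| |x.2|).trans_lt h
      have h2 := (le_max_right |x.1| |x.2|).trans_lt h
      rw [abs_lt] at h1 h2
      exact hx (Set.mem_Icc.mpr ⟨⟨h1.1.le, h2.1.le⟩, ⟨h1.2.le, h2.2.le⟩⟩)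
    have h0 := (hout' x hRle).2
    simp [h0]
  calc ∫ x, (fderiv ℝ ψ x (1, 0) * fderiv ℝ η x (0, 1)
        - fderiv ℝ ψ x (0, 1) * fderiv ℝ η x (1, 0))
      = ∫ x in Icc ((-R, -R) : ℝ × ℝ) (R, R), (fderiv ℝ ψ x (1, 0) * fderiv ℝ η x (0, 1)
        - fderiv ℝ ψ x (0, 1) * fderiv ℝ η x (1, 0)) :=
        (setIntegral_eq_integral_of_forall_compl_eq_zero hext).symm
    _ = ∫ x in Icc ((-R, -R) : ℝ × ℝ) (R, R), -(f' x (1, 0) + g' x (0, 1)) := by simp_rw [hT]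
    _ = 0 := by rw [integral_neg, hdiv0, neg_zero]

lemma conv_bound (k : ContDiffBump (0 : ℝ × ℝ)) (g : ℝ × ℝ → ℂ) (hg : Continuous g) {C : ℝ}
    (hC : ∀ x, ‖g x‖ ≤ C) (x : ℝ × ℝ) :
    ‖(k.normed volume ⋆[ContinuousLinearMap.lsmul ℝ ℝ, volume] g) x‖ ≤ 3 * C := by
  have h0 : (0 : ℝ) ≤ C := le_trans (norm_nonneg _) (hC 0)
  have hd : dist ((k.normed volume ⋆[ContinuousLinearMap.lsmul ℝ ℝ, volume] g) x) (g x) ≤ 2 * C :=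
    k.dist_normed_convolution_le hg.aestronglyMeasurable
      (fun y _ => (dist_le_norm_add_norm _ _).trans (by linarith [hC y, hC x]))
  calc ‖(k.normed volume ⋆[ContinuousLinearMap.lsmul ℝ ℝ, volume] g) x‖
      ≤ ‖g x‖ + ‖(k.normed volume ⋆[ContinuousLinearMap.lsmul ℝ ℝ, volume] g) x - g x‖ :=
        norm_le_insert' _ _
    _ = ‖g x‖ + dist ((k.normed volume ⋆[ContinuousLinearMap.lsmul ℝ ℝ, volume] g) x) (g x) := by
        rw [dist_eq_norm]
    _ ≤ C + 2 * C := add_le_add (hC x) hd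
    _ = 3 * C := by ring

theorem integral_jacobian_zero_of_compact_support
    (U : Set (ℝ × ℝ)) (hUopen : IsOpen U) (hUbdd : Bornology.IsBounded U)
    (hUconn : IsConnected U)
    (φ η : ℝ × ℝ → ℂ)
    (hφ : ContDiff ℝ 1 φ) (hφsupp : HasCompactSupport φ) (hφU : tsupport φ ⊆ U)
    (hη : ContDiff ℝ 1 η) :
    ∫ x in U,
      (fderiv ℝ φ x (1, 0) * fderiv ℝ η x (0, 1)
        - fderiv ℝ φ x (0, 1) * fderiv ℝ η x (1, 0)) = 0 := by
  -- reduce to an integral over all of ℝ²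
  -- reduce to an integral over all of ℝ²
  have hU0 : ∀ x : ℝ × ℝ, x ∉ U →
      (fderiv ℝ φ x (1, 0) * fderiv ℝ η x (0, 1)
        - fderiv ℝ φ x (0, 1) * fderiv ℝ η x (1, 0)) = 0 := by
    intro x hx
    have hxt : x ∉ tsupport φ := fun h => hx (hφU h)
    simp [fderiv_zero_of_nmem_tsupport hxt]
  rw [setIntegral_eq_integral_of_forall_compl_eq_zero hU0]
  -- mollifiers
  have hrpos : ∀ n : ℕ, (0:ℝ) < ((n:ℝ)+1)⁻¹ := fun n => by positivity
  let b : ℕ → ContDiffBump (0 : ℝ × ℝ) := fun n =>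
    ⟨((n:ℝ)+1)⁻¹/2, ((n:ℝ)+1)⁻¹, by positivity, half_lt_self (hrpos n)⟩
  let φn : ℕ → ℝ × ℝ → ℂ := fun n =>
    (b n).normed volume ⋆[ContinuousLinearMap.lsmul ℝ ℝ, volume] φ
  have hφloc : LocallyIntegrable φ volume := hφ.continuous.locallyIntegrable
  have hbl : ∀ n, LocallyIntegrable ((b n).normed volume) volume := fun n =>
    ((b n).integrable_normed).locallyIntegrable
  have hsmooth : ∀ n, ContDiff ℝ 2 (φn n) := fun n =>
    HasCompactSupport.contDiff_convolution_left _ (b n).hasCompactSupport_normed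
      (b n).contDiff_normed hφloc
  have hsupp : ∀ n, HasCompactSupport (φn n) := fun n =>
    HasCompactSupport.convolution _ (b n).hasCompactSupport_normed hφsupp
  -- derivative of the mollification
  have hder : ∀ n x, HasFDerivAt (φn n)
      (((b n).normed volume ⋆[(ContinuousLinearMap.lsmul ℝ ℝ).precompR (ℝ × ℝ), volume]
        fderiv ℝ φ) x) x := fun n x =>
    hφsupp.hasFDerivAt_convolution_right _ (hbl n) hφ x
  have hderiv : ∀ n x (v : ℝ × ℝ), fderiv ℝ (φn n) x v =
      ((b n).normed volume ⋆[ContinuousLinearMap.lsmul ℝ ℝ, volume]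
        (fun a => fderiv ℝ φ a v)) x := by
    intro n x v
    rw [(hder n x).fderiv]
    exact convolution_precompR_apply _ (hbl n) (hφsupp.fderiv ℝ)
      (hφ.continuous_fderiv one_ne_zero) x v
  -- pointwise convergence of derivatives
  have hrout : Filter.Tendsto (fun n : ℕ => (b n).rOut) atTop (𝓝 0) := by
    show Filter.Tendsto (fun n : ℕ => ((n:ℝ)+1)⁻¹) atTop (𝓝 0)
    simpa [one_div] using tendsto_one_div_add_atTop_nhds_zero_nat (𝕜 := ℝ)
  have htend : ∀ (x v : ℝ × ℝ), Filter.Tendsto (fun n => fderiv ℝ (φn n) x v) atTop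
      (𝓝 (fderiv ℝ φ x v)) := by
    intro x v
    simp_rw [hderiv]
    exact ContDiffBump.convolution_tendsto_right_of_continuous hrout
      ((hφ.continuous_fderiv one_ne_zero).clm_apply continuous_const) x
  -- uniform bound on derivatives
  obtain ⟨C, hC⟩ : ∃ C, ∀ x, ‖fderiv ℝ φ x‖ ≤ C :=
    (hφ.continuous_fderiv one_ne_zero).bounded_above_of_compact_support (hφsupp.fderiv ℝ)
  have hC0 : (0:ℝ) ≤ C := le_trans (norm_nonneg _) (hC 0)
  have hCv : ∀ v : ℝ × ℝ, ‖v‖ ≤ 1 → ∀ x, ‖fderiv ℝ φ x v‖ ≤ C := fun v hv x =>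
    (ContinuousLinearMap.le_opNorm _ _).trans (by nlinarith [hC x, norm_nonneg (fderiv ℝ φ x)])
  have hφnb : ∀ n x, ∀ v : ℝ × ℝ, ‖v‖ ≤ 1 → ‖fderiv ℝ (φn n) x v‖ ≤ 3 * C := by
    intro n x v hv
    rw [hderiv]
    exact conv_bound (b n) _ ((hφ.continuous_fderiv one_ne_zero).clm_apply continuous_const)
      (hCv v hv) x
  have hnorm10 : ‖((1:ℝ), (0:ℝ))‖ ≤ 1 := by
    rw [Prod.norm_def]; simp [Real.norm_eq_abs]
  have hnorm01 : ‖((0:ℝ), (1:ℝ))‖ ≤ 1 := by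
    rw [Prod.norm_def]; simp [Real.norm_eq_abs]
  -- the compact set carrying all supports
  set K : Set (ℝ × ℝ) := closedBall (0 : ℝ × ℝ) 1 + tsupport φ with hKdef
  have hK : IsCompact K := (isCompact_closedBall _ _).add hφsupp
  have hsuppK : ∀ n, tsupport (φn n) ⊆ K := by
    intro n
    apply closure_minimal _ hK.isClosed
    refine (support_convolution_subset _).trans (Set.add_subset_add ?_ subset_closure)
    rw [(b n).support_normed_eq]
    refine ball_subset_closedBall.trans (closedBall_subset_closedBall ?_)
    show ((n:ℝ)+1)⁻¹ ≤ 1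
    rw [inv_le_one_iff₀]
    right; simp [Nat.cast_nonneg]
  have hKout : ∀ n x, x ∉ K → fderiv ℝ (φn n) x = 0 := fun n x hx =>
    fderiv_zero_of_nmem_tsupport (fun h => hx (hsuppK n h))
  -- bound on the derivative of η on K
  obtain ⟨D, hD⟩ : ∃ D, ∀ x ∈ K, ‖fderiv ℝ η x‖ ≤ D :=
    hK.exists_bound_of_continuousOn (hη.continuous_fderiv one_ne_zero).continuousOn
  -- dominated convergence
  set F : ℕ → ℝ × ℝ → ℂ := fun n x =>
    fderiv ℝ (φn n) x (1, 0) * fderiv ℝ η x (0, 1)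
      - fderiv ℝ (φn n) x (0, 1) * fderiv ℝ η x (1, 0) with hF
  have hFmeas : ∀ n, AEStronglyMeasurable (F n) volume := by
    intro n
    have hc : Continuous (F n) := by
      have h1 : Continuous (fderiv ℝ (φn n)) := (hsmooth n).continuous_fderiv two_ne_zero
      have h2 : Continuous (fderiv ℝ η) := hη.continuous_fderiv one_ne_zero
      exact ((h1.clm_apply continuous_const).mul (h2.clm_apply continuous_const)).sub
        ((h1.clm_apply continuous_const).mul (h2.clm_apply continuous_const))
    exact hc.aestronglyMeasurable
  have hboundint : Integrable (K.indicator fun _ => (6 : ℝ) * C * D) volume := by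
    rw [integrable_indicator_iff hK.measurableSet]
    exact integrableOn_const hK.measure_lt_top.ne
  have h_bound : ∀ n, ∀ᵐ x ∂(volume : Measure (ℝ × ℝ)),
      ‖F n x‖ ≤ K.indicator (fun _ => (6 : ℝ) * C * D) x := by
    intro n
    refine Filter.Eventually.of_forall fun x => ?_
    by_cases hx : x ∈ K
    · rw [Set.indicator_of_mem hx]
      have hDnn : (0:ℝ) ≤ D := le_trans (norm_nonneg _) (hD x hx)
      have hη1 : ‖fderiv ℝ η x (1, 0)‖ ≤ D :=
        (ContinuousLinearMap.le_opNorm _ _).trans (by nlinarith [hD x hx, norm_nonneg (fderiv ℝ η x)])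
      have hη2 : ‖fderiv ℝ η x (0, 1)‖ ≤ D :=
        (ContinuousLinearMap.le_opNorm _ _).trans (by nlinarith [hD x hx, norm_nonneg (fderiv ℝ η x)])
      have h1 := hφnb n x _ hnorm10
      have h2 := hφnb n x _ hnorm01
      calc ‖F n x‖ ≤ ‖fderiv ℝ (φn n) x (1, 0) * fderiv ℝ η x (0, 1)‖
            + ‖fderiv ℝ (φn n) x (0, 1) * fderiv ℝ η x (1, 0)‖ := norm_sub_le _ _
        _ ≤ 3 * C * D + 3 * C * D := by
            rw [norm_mul, norm_mul]
            exact add_le_add (mul_le_mul h1 hη2 (norm_nonneg _) (by linarith))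
              (mul_le_mul h2 hη1 (norm_nonneg _) (by linarith))
        _ = 6 * C * D := by ring
    · rw [Set.indicator_of_notMem hx]
      have h0 := hKout n x hx
      simp [hF, h0]
  have h_lim : ∀ᵐ x ∂(volume : Measure (ℝ × ℝ)), Filter.Tendsto (fun n => F n x) atTop
      (𝓝 (fderiv ℝ φ x (1, 0) * fderiv ℝ η x (0, 1)
        - fderiv ℝ φ x (0, 1) * fderiv ℝ η x (1, 0))) := by
    refine Filter.Eventually.of_forall fun x => ?_
    exact ((htend x (1, 0)).mul tendsto_const_nhds).sub ((htend x (0, 1)).mul tendsto_const_nhds)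
  have key := tendsto_integral_of_dominated_convergence _ hFmeas hboundint h_bound h_lim
  have hzero : ∀ n, ∫ x, F n x = 0 := fun n => key_smooth (φn n) η (hsmooth n) (hsupp n) hη
  have hconst : Filter.Tendsto (fun n => ∫ x, F n x) atTop (𝓝 0) := by
    simp only [hzero]; exact tendsto_const_nhds
  exact tendsto_nhds_unique key hconst
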